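/- Fix 0 < ε < 1. Let K : ℝ² × ℝ² → ℂ be a measurable kernel satisfying the pointwise bound |K(x,y)| ≤ C₀ · (⟨x⟩^{1−ε} · ⟨|x|−|y|⟩ · ⟨|x|+|y|⟩)^{-1} for all x, y ∈ ℝ², for some constant C₀ > 0. Then for every p with 1 ≤ p < ∞, the integral operator (Ku)(x) = ∫_{ℝ²} K(x,y) u(y) dy is bounded on L^p(ℝ²): there is a constant C (depending on C₀, ε and p) such that for every u ∈ L^p(ℝ²), the integral defining Ku converges absolutely for almost every x and ‖Ku‖_{L^p(ℝ²)} ≤ C ‖u‖_{L^p(ℝ²)}. -/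

import Mathlib

open MeasureTheory Real Set Metric MeasureTheory.Measure
open scoped ENNReal NNReal

noncomputable section

/-- Japanese bracket as an `ℝ≥0∞`-valued function. -/
def JB (t : ℝ) : ℝ≥0∞ := ENNReal.ofReal (Real.sqrt (1 + t ^ 2))

lemma sqrt_one_add_sq_pos (t : ℝ) : 0 < Real.sqrt (1 + t ^ 2) :=
  Real.sqrt_pos.2 (by positivity)

lemma one_le_sqrt_one_add_sq (t : ℝ) : 1 ≤ Real.sqrt (1 + t ^ 2) := by
  nlinarith [Real.sq_sqrt (show (0:ℝ) ≤ 1 + t ^ 2 by positivity),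
    Real.sqrt_nonneg (1 + t ^ 2)]

lemma one_le_JB (t : ℝ) : 1 ≤ JB t := by
  rw [JB, ← ENNReal.ofReal_one]
  exact ENNReal.ofReal_le_ofReal (one_le_sqrt_one_add_sq t)

lemma JB_ne_zero (t : ℝ) : JB t ≠ 0 :=
  fun h => by simpa [h] using one_le_JB t

lemma JB_pos (t : ℝ) : 0 < JB t := lt_of_lt_of_le zero_lt_one (one_le_JB t)

lemma JB_ne_top (t : ℝ) : JB t ≠ ⊤ := ENNReal.ofReal_ne_top

lemma JB_neg (t : ℝ) : JB (-t) = JB t := by simp [JB]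

lemma measurable_JB : Measurable JB :=
  ENNReal.measurable_ofReal.comp
    (Real.continuous_sqrt.comp (by continuity)).measurable

/-- Peetre's inequality. -/
lemma JB_add_le (a b : ℝ) : JB (a + b) ≤ ENNReal.ofReal (Real.sqrt 2) * JB a * JB b := by
  rw [JB, JB, JB, ← ENNReal.ofReal_mul (Real.sqrt_nonneg 2),
    ← ENNReal.ofReal_mul (by positivity)]
  refine ENNReal.ofReal_le_ofReal ?_
  rw [← Real.sqrt_mul (by norm_num), ← Real.sqrt_mul (by positivity)]
  exact Real.sqrt_le_sqrt (by nlinarith [sq_nonneg (a*b - 1), sq_nonneg (a + b), sq_nonneg (a - b)])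

/-- `JB v ≤ √2 * JB u * JB (u - v)`. -/
lemma JB_le_mul (u v : ℝ) : JB v ≤ ENNReal.ofReal (Real.sqrt 2) * JB u * JB (u - v) := by
  have := JB_add_le u (v - u)
  rw [add_sub_cancel] at this
  calc JB v ≤ ENNReal.ofReal (Real.sqrt 2) * JB u * JB (v - u) := this
    _ = _ := by rw [← JB_neg (v - u), neg_sub]

lemma JB_int {γ : ℝ} (hγ : 1 < γ) : ∫⁻ u : ℝ, JB u ^ (-γ) ≠ ⊤ := by
  have hint : Integrable (fun u : ℝ => (1 + ‖u‖) ^ (-γ)) :=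
    integrable_one_add_norm (by simpa using hγ)
  have hb : ∀ u : ℝ, JB u ^ (-γ) ≤
      ENNReal.ofReal ((Real.sqrt 2) ^ γ) * ENNReal.ofReal ((1 + ‖u‖) ^ (-γ)) := by
    intro u
    rw [JB, ENNReal.ofReal_rpow_of_pos (sqrt_one_add_sq_pos u),
      ← ENNReal.ofReal_mul (by positivity)]
    refine ENNReal.ofReal_le_ofReal ?_
    have h1 : (1 + ‖u‖) / Real.sqrt 2 ≤ Real.sqrt (1 + u ^ 2) := by
      rw [Real.le_sqrt' (by positivity)]
      rw [div_pow, Real.sq_sqrt (by norm_num : (0:ℝ) ≤ 2)]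
      rw [div_le_iff₀ (by norm_num : (0:ℝ) < 2)]
      have hu : ‖u‖ ^ 2 = u ^ 2 := by rw [Real.norm_eq_abs, sq_abs]
      nlinarith [sq_nonneg (1 - ‖u‖)]
    have h3 : Real.sqrt (1 + u ^ 2) ^ (-γ) ≤ ((1 + ‖u‖) / Real.sqrt 2) ^ (-γ) :=
      Real.rpow_le_rpow_of_nonpos (by positivity) h1 (by linarith)
    calc Real.sqrt (1 + u ^ 2) ^ (-γ) ≤ ((1 + ‖u‖) / Real.sqrt 2) ^ (-γ) := h3
      _ = Real.sqrt 2 ^ γ * (1 + ‖u‖) ^ (-γ) := by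
          rw [Real.div_rpow (by positivity) (Real.sqrt_nonneg 2),
            Real.rpow_neg (by positivity : (0:ℝ) ≤ 1 + ‖u‖),
            Real.rpow_neg (Real.sqrt_nonneg 2), div_eq_mul_inv, inv_inv, mul_comm]
  have hle : ∫⁻ u : ℝ, JB u ^ (-γ) ≤
      ENNReal.ofReal ((Real.sqrt 2) ^ γ) * ∫⁻ u : ℝ, ENNReal.ofReal ((1 + ‖u‖) ^ (-γ)) := by
    calc ∫⁻ u : ℝ, JB u ^ (-γ)
        ≤ ∫⁻ u : ℝ, ENNReal.ofReal ((Real.sqrt 2) ^ γ) * ENNReal.ofReal ((1 + ‖u‖) ^ (-γ)) :=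
          lintegral_mono hb
      _ = _ := by
          rw [lintegral_const_mul']
          exact ENNReal.ofReal_ne_top
  refine ne_top_of_le_ne_top ?_ hle
  refine ENNReal.mul_ne_top ENNReal.ofReal_ne_top ?_
  refine ne_of_lt (lt_of_le_of_lt (lintegral_mono fun u => Real.ofReal_le_enorm _) ?_)
  exact hint.hasFiniteIntegral

lemma measurable_JB_rpow (c : ℝ) (v : ℝ) : Measurable fun u : ℝ => JB (u - v) ^ c :=
  (measurable_JB.comp (measurable_id.sub_const v)).pow_const c

lemma conv_bdd {α β : ℝ} (hα : 0 < α) (hβ : 0 < β) (hαβ : 1 < α + β) :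
    ∃ D : ℝ≥0∞, D ≠ ⊤ ∧ ∀ v : ℝ,
      ∫⁻ u : ℝ, JB u ^ (-α) * JB (u - v) ^ (-β) ≤ D := by
  set M : ℝ≥0∞ := ∫⁻ u : ℝ, JB u ^ (-(α + β)) with hM
  have hMt : M ≠ ⊤ := JB_int hαβ
  refine ⟨M ^ (α / (α + β)) * M ^ (β / (α + β)), ?_, fun v => ?_⟩
  · exact ENNReal.mul_ne_top (ENNReal.rpow_ne_top_of_nonneg (by positivity) hMt)
      (ENNReal.rpow_ne_top_of_nonneg (by positivity) hMt)
  · have hpq : ((α + β)/α).HolderConjugate ((α + β)/β) := by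
      refine Real.holderConjugate_iff.mpr ⟨?_, ?_⟩
      · rw [lt_div_iff₀ hα]; linarith
      · field_simp
    have h := ENNReal.lintegral_mul_le_Lp_mul_Lq (volume : Measure ℝ) hpq
      (f := fun u => JB u ^ (-α)) (g := fun u => JB (u - v) ^ (-β))
      (measurable_JB.pow_const _).aemeasurable
      (measurable_JB_rpow _ v).aemeasurable
    refine le_trans h (le_of_eq ?_)
    have e1 : ∀ u : ℝ, (JB u ^ (-α)) ^ ((α + β)/α) = JB u ^ (-(α + β)) := by
      intro u
      rw [← ENNReal.rpow_mul]
      congr 1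
      field_simp
    have e2 : ∀ u : ℝ, (JB (u - v) ^ (-β)) ^ ((α + β)/β) = JB (u - v) ^ (-(α + β)) := by
      intro u
      rw [← ENNReal.rpow_mul]
      congr 1
      field_simp
    have e3 : ∫⁻ u : ℝ, JB (u - v) ^ (-(α + β)) = M := by
      rw [hM]
      simp_rw [sub_eq_add_neg]
      exact lintegral_add_right_eq_self (fun u : ℝ => JB u ^ (-(α + β))) (-v)
    simp_rw [e1, e2, e3]
    rw [← hM, one_div, one_div, inv_div, inv_div]

lemma conv_decay {σ : ℝ} (hσ0 : 0 < σ) (hσ1 : σ < 1) :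
    ∃ D : ℝ≥0∞, D ≠ ⊤ ∧ ∀ v : ℝ,
      ∫⁻ u : ℝ, JB u ^ (-σ) * JB (u - v) ^ (-1 : ℝ) ≤ D * JB v ^ (-(σ/4)) := by
  obtain ⟨D₀, hD₀, hD⟩ := conv_bdd (α := 3*σ/4) (β := 1 - σ/4)
    (by linarith) (by linarith) (by linarith)
  set c : ℝ≥0∞ := ENNReal.ofReal (Real.sqrt 2) ^ (σ/4) with hc
  have hct : c ≠ ⊤ := ENNReal.rpow_ne_top_of_nonneg (by positivity) ENNReal.ofReal_ne_top
  refine ⟨c * D₀, ENNReal.mul_ne_top hct hD₀, fun v => ?_⟩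
  have key : ∀ u : ℝ, JB u ^ (-σ) * JB (u - v) ^ (-1 : ℝ) ≤
      (c * JB v ^ (-(σ/4))) * (JB u ^ (-(3*σ/4)) * JB (u - v) ^ (-(1 - σ/4))) := by
    intro u
    have h1 : JB u ^ (-σ) = JB u ^ (-(3*σ/4)) * JB u ^ (-(σ/4)) := by
      rw [← ENNReal.rpow_add _ _ (JB_ne_zero u) (JB_ne_top u)]
      ring_nf
    have h2 : JB (u - v) ^ (-1 : ℝ) = JB (u - v) ^ (-(1 - σ/4)) * JB (u - v) ^ (-(σ/4)) := by
      rw [← ENNReal.rpow_add _ _ (JB_ne_zero _) (JB_ne_top _)]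
      ring_nf
    have h3 : JB u ^ (-(σ/4)) * JB (u - v) ^ (-(σ/4)) ≤ c * JB v ^ (-(σ/4)) := by
      rw [← ENNReal.mul_rpow_of_ne_top (JB_ne_top u) (JB_ne_top (u - v))]
      have h4 : JB v ≤ ENNReal.ofReal (Real.sqrt 2) * (JB u * JB (u - v)) := by
        rw [← mul_assoc]; exact JB_le_mul u v
      have h5 : (JB v) ^ (σ/4) ≤ c * (JB u * JB (u - v)) ^ (σ/4) := by
        rw [hc, ← ENNReal.mul_rpow_of_nonneg _ _ (by positivity : (0:ℝ) ≤ σ/4)]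
        exact ENNReal.rpow_le_rpow h4 (by positivity)
      set X : ℝ≥0∞ := (JB u * JB (u - v)) ^ (σ/4) with hX
      set V : ℝ≥0∞ := (JB v) ^ (σ/4) with hV
      have hX0 : X ≠ 0 := by
        rw [hX]
        simp [ENNReal.rpow_eq_zero_iff, JB_ne_zero, JB_ne_top,
          mul_eq_zero, ENNReal.mul_eq_top]
      have hXt : X ≠ ⊤ := ENNReal.rpow_ne_top_of_nonneg (by positivity)
        (ENNReal.mul_ne_top (JB_ne_top u) (JB_ne_top (u - v)))
      have hV0 : V ≠ 0 := by
        rw [hV]; simp [ENNReal.rpow_eq_zero_iff, JB_ne_zero, JB_ne_top]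
      have hVt : V ≠ ⊤ := ENNReal.rpow_ne_top_of_nonneg (by positivity) (JB_ne_top v)
      rw [ENNReal.rpow_neg, ENNReal.rpow_neg, ← hX, ← hV]
      calc X⁻¹ = V * V⁻¹ * X⁻¹ := by rw [ENNReal.mul_inv_cancel hV0 hVt, one_mul]
        _ ≤ (c * X) * V⁻¹ * X⁻¹ := by
            exact mul_le_mul_left (mul_le_mul_left h5 _) _
        _ = c * V⁻¹ * (X * X⁻¹) := by ring
        _ = c * V⁻¹ := by rw [ENNReal.mul_inv_cancel hX0 hXt, mul_one]
    calc JB u ^ (-σ) * JB (u - v) ^ (-1 : ℝ)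
        = (JB u ^ (-(3*σ/4)) * JB (u - v) ^ (-(1 - σ/4))) *
            (JB u ^ (-(σ/4)) * JB (u - v) ^ (-(σ/4))) := by rw [h1, h2]; ring
      _ ≤ (JB u ^ (-(3*σ/4)) * JB (u - v) ^ (-(1 - σ/4))) * (c * JB v ^ (-(σ/4))) :=
          mul_le_mul_right h3 _
      _ = _ := by ring
  calc ∫⁻ u : ℝ, JB u ^ (-σ) * JB (u - v) ^ (-1 : ℝ)
      ≤ ∫⁻ u : ℝ, (c * JB v ^ (-(σ/4))) * (JB u ^ (-(3*σ/4)) * JB (u - v) ^ (-(1 - σ/4))) :=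
        lintegral_mono key
    _ = (c * JB v ^ (-(σ/4))) * ∫⁻ u : ℝ, JB u ^ (-(3*σ/4)) * JB (u - v) ^ (-(1 - σ/4)) := by
        rw [lintegral_const_mul]
        exact (measurable_JB.pow_const _).mul (measurable_JB_rpow _ v)
    _ ≤ (c * JB v ^ (-(σ/4))) * D₀ := mul_le_mul_right (hD v) _
    _ = c * D₀ * JB v ^ (-(σ/4)) := by ring

local notation "E2" => EuclideanSpace ℝ (Fin 2)

lemma polar_lintegral (f : ℝ → ℝ≥0∞) (hf : Measurable f) :
    ∫⁻ x : E2, f ‖x‖ =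
      (2 * volume (ball (0 : E2) 1)) * ∫⁻ r in Ioi (0:ℝ), ENNReal.ofReal r * f r := by
  have hdim : Module.finrank ℝ E2 = 2 := by simp
  calc ∫⁻ x : E2, f ‖x‖
      = ∫⁻ x in ({(0:E2)}ᶜ), f ‖x‖ := by rw [restrict_compl_singleton]
    _ = ∫⁻ x : ({(0:E2)}ᶜ : Set E2), f ‖x.1‖ ∂(volume.comap Subtype.val) := by
        exact (lintegral_subtype_comap (measurableSet_singleton _).compl
          (fun a => f ‖a‖)).symm
    _ = ∫⁻ z : sphere (0:E2) 1 × Ioi (0:ℝ), f z.2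
          ∂((volume : Measure E2).toSphere.prod (volumeIoiPow (Module.finrank ℝ E2 - 1))) := by
        simpa only [Function.comp_def, homeomorphUnitSphereProd_apply_snd_coe] using
          ((measurePreserving_homeomorphUnitSphereProd
          (volume : Measure E2)).lintegral_comp
          ((hf.comp measurable_subtype_coe).comp measurable_snd))
    _ = (2 * volume (ball (0 : E2) 1)) * ∫⁻ r in Ioi (0:ℝ), ENNReal.ofReal r * f r := by
        have hmz : AEMeasurable (fun z : sphere (0:E2) 1 × Ioi (0:ℝ) => f z.2)
            ((volume : Measure E2).toSphere.prod
              (volumeIoiPow (Module.finrank ℝ E2 - 1))) :=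
          (((hf.comp measurable_subtype_coe).comp measurable_snd).aemeasurable)
        rw [lintegral_prod (fun z : sphere (0:E2) 1 × Ioi (0:ℝ) => f z.2) hmz]
        simp only [lintegral_const]
        rw [mul_comm, toSphere_apply_univ, hdim]
        congr 1
        have : ∫⁻ (y : Ioi (0:ℝ)), f y ∂(volumeIoiPow (2 - 1)) =
            ∫⁻ (y : Ioi (0:ℝ)), ENNReal.ofReal (y.1 ^ (2-1)) * f y
              ∂(volume.comap Subtype.val) := by
          rw [volumeIoiPow]
          exact lintegral_withDensity_eq_lintegral_mul _
            ((measurable_subtype_coe.pow_const _).ennreal_ofReal)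
            (hf.comp measurable_subtype_coe)
        rw [this]
        calc ∫⁻ (y : Ioi (0:ℝ)), ENNReal.ofReal (y.1 ^ (2-1)) * f y
              ∂(volume.comap Subtype.val)
            = ∫⁻ r in Ioi (0:ℝ), ENNReal.ofReal (r ^ (2-1)) * f r :=
              lintegral_subtype_comap measurableSet_Ioi
                (fun r => ENNReal.ofReal (r ^ (2-1)) * f r)
          _ = _ := by simp


lemma measurable_F (g : ℝ → ℝ≥0∞) (hg : Measurable g) :
    Measurable fun y : E2 => g ‖y‖ := hg.comp measurable_norm

lemma ofReal_le_JB_add {r t : ℝ} (hr : 0 ≤ r) (ht : 0 ≤ t) :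
    ENNReal.ofReal t ≤ JB (r + t) := by
  refine ENNReal.ofReal_le_ofReal ?_
  nlinarith [Real.sq_sqrt (show (0:ℝ) ≤ 1 + (r + t) ^ 2 by positivity),
    Real.sqrt_nonneg (1 + (r + t) ^ 2)]

lemma core_bound {σ : ℝ} (hσ0 : 0 < σ) (hσ1 : σ < 1) :
    ∃ D : ℝ≥0∞, D ≠ ⊤ ∧ ∀ r : ℝ, 0 ≤ r →
      ∫⁻ y : E2, JB ‖y‖ ^ (-σ) * (JB (r - ‖y‖))⁻¹ * (JB (r + ‖y‖))⁻¹ ≤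
        D * JB r ^ (-(σ/4)) := by
  obtain ⟨D₀, hD₀t, hD₀⟩ := conv_decay hσ0 hσ1
  set c₂ : ℝ≥0∞ := 2 * volume (ball (0 : E2) 1) with hc₂
  have hc₂t : c₂ ≠ ⊤ := ENNReal.mul_ne_top (by norm_num) measure_ball_lt_top.ne
  refine ⟨c₂ * D₀, ENNReal.mul_ne_top hc₂t hD₀t, fun r hr => ?_⟩
  have hFm : ∀ r : ℝ, Measurable fun t : ℝ =>
      JB t ^ (-σ) * (JB (r - t))⁻¹ * (JB (r + t))⁻¹ := by
    intro r
    exact ((measurable_JB.pow_const _).mul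
      ((measurable_JB.comp ((measurable_const.sub measurable_id))).inv)).mul
      ((measurable_JB.comp ((measurable_const.add measurable_id))).inv)
  calc ∫⁻ y : E2, JB ‖y‖ ^ (-σ) * (JB (r - ‖y‖))⁻¹ * (JB (r + ‖y‖))⁻¹
      = c₂ * ∫⁻ t in Ioi (0:ℝ), ENNReal.ofReal t *
          (JB t ^ (-σ) * (JB (r - t))⁻¹ * (JB (r + t))⁻¹) :=
        polar_lintegral _ (hFm r)
    _ ≤ c₂ * ∫⁻ t in Ioi (0:ℝ), JB t ^ (-σ) * (JB (r - t))⁻¹ := by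
        have hgm : Measurable fun t : ℝ => JB t ^ (-σ) * (JB (r - t))⁻¹ :=
          (measurable_JB.pow_const _).mul
            ((measurable_JB.comp (measurable_const.sub measurable_id)).inv)
        refine mul_le_mul_right (setLIntegral_mono hgm fun t ht => ?_) _
        have ht' : (0:ℝ) ≤ t := le_of_lt ht
        calc ENNReal.ofReal t * (JB t ^ (-σ) * (JB (r - t))⁻¹ * (JB (r + t))⁻¹)
            = (JB t ^ (-σ) * (JB (r - t))⁻¹) * (ENNReal.ofReal t * (JB (r + t))⁻¹) := by ring
          _ ≤ (JB t ^ (-σ) * (JB (r - t))⁻¹) * (JB (r + t) * (JB (r + t))⁻¹) :=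
              mul_le_mul_right (mul_le_mul_left (ofReal_le_JB_add hr ht') _) _
          _ = (JB t ^ (-σ) * (JB (r - t))⁻¹) *  1 := by
              rw [ENNReal.mul_inv_cancel (JB_ne_zero _) (JB_ne_top _)]
          _ = _ := by rw [mul_one]
    _ ≤ c₂ * ∫⁻ t : ℝ, JB t ^ (-σ) * (JB (r - t))⁻¹ :=
        mul_le_mul_right (setLIntegral_le_lintegral _ _) _
    _ ≤ c₂ * (D₀ * JB r ^ (-(σ/4))) := by
        refine mul_le_mul_right ?_ _
        have : ∀ t : ℝ, JB t ^ (-σ) * (JB (r - t))⁻¹ = JB t ^ (-σ) * JB (t - r) ^ (-1:ℝ) := by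
          intro t
          rw [ENNReal.rpow_neg_one, ← JB_neg (t - r), neg_sub]
        simp_rw [this]
        exact hD₀ r
    _ = c₂ * D₀ * JB r ^ (-(σ/4)) := by ring

/-- The bounding kernel. -/
def kbound (ε C₀ : ℝ) (x y : E2) : ℝ≥0∞ :=
  ENNReal.ofReal C₀ * JB ‖x‖ ^ (-(1 - ε)) * (JB (‖x‖ - ‖y‖))⁻¹ * (JB (‖x‖ + ‖y‖))⁻¹

lemma measurable_kbound (ε C₀ : ℝ) : Measurable (Function.uncurry (kbound ε C₀)) := by
  have h1 : Measurable fun z : E2 × E2 => ‖z.1‖ := measurable_fst.norm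
  have h2 : Measurable fun z : E2 × E2 => ‖z.2‖ := measurable_snd.norm
  exact ((measurable_const.mul
    ((measurable_JB.comp h1).pow_const _)).mul
    ((measurable_JB.comp (h1.sub h2)).inv)).mul
    ((measurable_JB.comp (h1.add h2)).inv)

lemma measurable_kbound_left (ε C₀ : ℝ) (x : E2) : Measurable (kbound ε C₀ x) :=
  (measurable_kbound ε C₀).of_uncurry_left

lemma condA {ε : ℝ} (hε : 0 < ε) (hε1 : ε < 1) (C₀ : ℝ) {s₁ : ℝ}
    (hs0 : 0 < s₁) (hs1 : s₁ < 1) (hs : 3 * s₁ ≤ 4 * (1 - ε)) :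
    ∃ A : ℝ≥0∞, A ≠ ⊤ ∧ ∀ x : E2,
      ∫⁻ y : E2, kbound ε C₀ x y * JB ‖y‖ ^ (-s₁) ≤ A * JB ‖x‖ ^ (-s₁) := by
  obtain ⟨D, hDt, hD⟩ := core_bound hs0 hs1
  refine ⟨ENNReal.ofReal C₀ * D, ENNReal.mul_ne_top ENNReal.ofReal_ne_top hDt, fun x => ?_⟩
  have hmeas : Measurable fun y : E2 =>
      JB ‖y‖ ^ (-s₁) * (JB (‖x‖ - ‖y‖))⁻¹ * (JB (‖x‖ + ‖y‖))⁻¹ :=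
    (((measurable_JB.comp measurable_norm).pow_const _).mul
      ((measurable_JB.comp (measurable_const.sub measurable_norm)).inv)).mul
      ((measurable_JB.comp (measurable_const.add measurable_norm)).inv)
  calc ∫⁻ y : E2, kbound ε C₀ x y * JB ‖y‖ ^ (-s₁)
      = (ENNReal.ofReal C₀ * JB ‖x‖ ^ (-(1 - ε))) *
          ∫⁻ y : E2, JB ‖y‖ ^ (-s₁) * (JB (‖x‖ - ‖y‖))⁻¹ * (JB (‖x‖ + ‖y‖))⁻¹ := by
        rw [← lintegral_const_mul _ hmeas]
        refine lintegral_congr fun y => ?_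
        rw [kbound]; ring
    _ ≤ (ENNReal.ofReal C₀ * JB ‖x‖ ^ (-(1 - ε))) * (D * JB ‖x‖ ^ (-(s₁/4))) :=
        mul_le_mul_right (hD ‖x‖ (norm_nonneg x)) _
    _ = (ENNReal.ofReal C₀ * D) * (JB ‖x‖ ^ (-(1 - ε)) * JB ‖x‖ ^ (-(s₁/4))) := by ring
    _ ≤ (ENNReal.ofReal C₀ * D) * JB ‖x‖ ^ (-s₁) := by
        refine mul_le_mul_right ?_ _
        rw [← ENNReal.rpow_add _ _ (JB_ne_zero _) (JB_ne_top _)]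
        exact ENNReal.rpow_le_rpow_of_exponent_le (one_le_JB _) (by linarith)

lemma condB {ε : ℝ} (hε : 0 < ε) (hε1 : ε < 1) (C₀ : ℝ) {s₂ : ℝ}
    (hs0 : 0 ≤ s₂) (hsε : s₂ < ε) (hs : 3 * s₂ ≤ 1 - ε) :
    ∃ B : ℝ≥0∞, B ≠ ⊤ ∧ ∀ y : E2,
      ∫⁻ x : E2, kbound ε C₀ x y * JB ‖x‖ ^ (-s₂) ≤ B * JB ‖y‖ ^ (-s₂) := by
  have hσ0 : 0 < 1 - ε + s₂ := by linarith
  have hσ1 : 1 - ε + s₂ < 1 := by linarith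
  obtain ⟨D, hDt, hD⟩ := core_bound hσ0 hσ1
  refine ⟨ENNReal.ofReal C₀ * D, ENNReal.mul_ne_top ENNReal.ofReal_ne_top hDt, fun y => ?_⟩
  have hmeas : Measurable fun x : E2 =>
      JB ‖x‖ ^ (-(1 - ε + s₂)) * (JB (‖y‖ - ‖x‖))⁻¹ * (JB (‖y‖ + ‖x‖))⁻¹ :=
    (((measurable_JB.comp measurable_norm).pow_const _).mul
      ((measurable_JB.comp (measurable_const.sub measurable_norm)).inv)).mul
      ((measurable_JB.comp (measurable_const.add measurable_norm)).inv)
  calc ∫⁻ x : E2, kbound ε C₀ x y * JB ‖x‖ ^ (-s₂)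
      = ENNReal.ofReal C₀ *
          ∫⁻ x : E2, JB ‖x‖ ^ (-(1 - ε + s₂)) * (JB (‖y‖ - ‖x‖))⁻¹ * (JB (‖y‖ + ‖x‖))⁻¹ := by
        rw [← lintegral_const_mul _ hmeas]
        refine lintegral_congr fun x => ?_
        rw [kbound]
        rw [show JB (‖y‖ - ‖x‖) = JB (‖x‖ - ‖y‖) by rw [← JB_neg (‖x‖ - ‖y‖), neg_sub]]
        rw [show (‖y‖ + ‖x‖ : ℝ) = ‖x‖ + ‖y‖ from add_comm _ _]
        rw [show JB ‖x‖ ^ (-(1 - ε + s₂)) = JB ‖x‖ ^ (-(1 - ε)) * JB ‖x‖ ^ (-s₂) by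
          rw [← ENNReal.rpow_add _ _ (JB_ne_zero _) (JB_ne_top _)]; ring_nf]
        ring
    _ ≤ ENNReal.ofReal C₀ * (D * JB ‖y‖ ^ (-((1 - ε + s₂)/4))) :=
        mul_le_mul_right (hD ‖y‖ (norm_nonneg y)) _
    _ = (ENNReal.ofReal C₀ * D) * JB ‖y‖ ^ (-((1 - ε + s₂)/4)) := by ring
    _ ≤ (ENNReal.ofReal C₀ * D) * JB ‖y‖ ^ (-s₂) :=
        mul_le_mul_right (ENNReal.rpow_le_rpow_of_exponent_le (one_le_JB _) (by linarith)) _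

lemma schur {p q : ℝ} (hpq : p.HolderConjugate q) {k : E2 → E2 → ℝ≥0∞}
    (hk : Measurable (Function.uncurry k))
    {w : E2 → ℝ≥0∞} (hw : Measurable w) (hw0 : ∀ x, w x ≠ 0) (hwt : ∀ x, w x ≠ ⊤)
    {A B : ℝ≥0∞}
    (hA : ∀ x, ∫⁻ y, k x y * w y ^ q ≤ A * w x ^ q)
    (hB : ∀ y, ∫⁻ x, k x y * w x ^ p ≤ B * w y ^ p)
    {g : E2 → ℝ≥0∞} (hg : Measurable g) :
    ∫⁻ x, (∫⁻ y, k x y * g y) ^ p ≤ A ^ (p/q) * B * ∫⁻ y, g y ^ p := by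
  have hp0 : 0 < p := hpq.pos
  have hq0 : 0 < q := hpq.symm.pos
  have hinv : p⁻¹ + q⁻¹ = 1 := hpq.inv_add_inv_eq_one
  set S : E2 → ℝ≥0∞ := fun x => ∫⁻ y, k x y * (g y ^ p * (w y ^ p)⁻¹) with hS
  have hwp0 : ∀ y, w y ^ p ≠ 0 := fun y => by
    simp [ENNReal.rpow_eq_zero_iff, hw0 y, hwt y]
  have hwpt : ∀ y, w y ^ p ≠ ⊤ := fun y =>
    ENNReal.rpow_ne_top_of_nonneg hp0.le (hwt y)
  have hSin_meas : Measurable (Function.uncurry fun x y => k x y * (g y ^ p * (w y ^ p)⁻¹)) := by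
    exact hk.mul (((hg.comp measurable_snd).pow_const _).mul
      (((hw.comp measurable_snd).pow_const _).inv))
  have hSmeas : Measurable S := hSin_meas.lintegral_prod_right
  have hstep1 : ∀ x, (∫⁻ y, k x y * g y) ≤ (A * w x ^ q) ^ (1/q) * S x ^ (1/p) := by
    intro x
    have hkx : Measurable (k x) := hk.of_uncurry_left
    have hsplit : ∀ y, k x y * g y =
        ((fun y => k x y ^ (1/q) * w y) * fun y => k x y ^ (1/p) * g y * (w y)⁻¹) y := by
      intro y
      have h1 : k x y ^ (1/q) * k x y ^ (1/p) = k x y := by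
        rw [← ENNReal.rpow_add_of_nonneg _ _ (by positivity) (by positivity),
          show 1/q + 1/p = 1 by rw [one_div, one_div]; linarith, ENNReal.rpow_one]
      show k x y * g y = (k x y ^ (1/q) * w y) * (k x y ^ (1/p) * g y * (w y)⁻¹)
      calc k x y * g y = (k x y ^ (1/q) * k x y ^ (1/p)) * g y * (w y * (w y)⁻¹) := by
            rw [h1, ENNReal.mul_inv_cancel (hw0 y) (hwt y), mul_one]
        _ = _ := by ring
    calc ∫⁻ y, k x y * g y
        = ∫⁻ y, ((fun y => k x y ^ (1/q) * w y) * fun y => k x y ^ (1/p) * g y * (w y)⁻¹) y :=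
          lintegral_congr hsplit
      _ ≤ (∫⁻ y, (k x y ^ (1/q) * w y) ^ q) ^ (1/q) *
            (∫⁻ y, (k x y ^ (1/p) * g y * (w y)⁻¹) ^ p) ^ (1/p) :=
          ENNReal.lintegral_mul_le_Lp_mul_Lq volume hpq.symm
            (((hkx.pow_const _).mul hw).aemeasurable)
            ((((hkx.pow_const _).mul hg).mul hw.inv).aemeasurable)
      _ = (∫⁻ y, k x y * w y ^ q) ^ (1/q) * S x ^ (1/p) := by
          congr 1
          · congr 1
            refine lintegral_congr fun y => ?_
            rw [ENNReal.mul_rpow_of_nonneg _ _ hq0.le, ← ENNReal.rpow_mul,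
              one_div, inv_mul_cancel₀ hq0.ne', ENNReal.rpow_one]
          · congr 1
            refine lintegral_congr fun y => ?_
            rw [ENNReal.mul_rpow_of_nonneg _ _ hp0.le, ENNReal.mul_rpow_of_nonneg _ _ hp0.le,
              ← ENNReal.rpow_mul, one_div, inv_mul_cancel₀ hp0.ne', ENNReal.rpow_one,
              ENNReal.inv_rpow, mul_assoc]
      _ ≤ (A * w x ^ q) ^ (1/q) * S x ^ (1/p) :=
          mul_le_mul_left (ENNReal.rpow_le_rpow (hA x) (by positivity)) _
  calc ∫⁻ x, (∫⁻ y, k x y * g y) ^ p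
      ≤ ∫⁻ x, A ^ (p/q) * (w x ^ p * S x) := by
        refine lintegral_mono fun x => ?_
        calc (∫⁻ y, k x y * g y) ^ p ≤ ((A * w x ^ q) ^ (1/q) * S x ^ (1/p)) ^ p :=
              ENNReal.rpow_le_rpow (hstep1 x) hp0.le
          _ = A ^ (p/q) * (w x ^ p * S x) := by
              rw [ENNReal.mul_rpow_of_nonneg _ _ hp0.le, ← ENNReal.rpow_mul,
                ← ENNReal.rpow_mul,
                show (1/p * p : ℝ) = 1 by field_simp,
                ENNReal.rpow_one,
                show (1/q * p : ℝ) = q⁻¹ * p by rw [one_div],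
                ENNReal.mul_rpow_of_nonneg _ _ (by positivity : (0:ℝ) ≤ q⁻¹ * p),
                ← ENNReal.rpow_mul,
                show (q * (q⁻¹ * p) : ℝ) = p by field_simp,
                show (q⁻¹ * p : ℝ) = p / q by rw [div_eq_mul_inv, mul_comm]]
              ring
    _ = A ^ (p/q) * ∫⁻ x, w x ^ p * S x :=
        lintegral_const_mul _ ((hw.pow_const _).mul hSmeas)
    _ ≤ A ^ (p/q) * (B * ∫⁻ y, g y ^ p) := by
        refine mul_le_mul_right ?_ _
        calc ∫⁻ x, w x ^ p * S x
            = ∫⁻ x, ∫⁻ y, w x ^ p * (k x y * (g y ^ p * (w y ^ p)⁻¹)) := by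
              refine lintegral_congr fun x => ?_
              rw [hS]
              exact (lintegral_const_mul _ (hSin_meas.of_uncurry_left)).symm
          _ = ∫⁻ y, ∫⁻ x, w x ^ p * (k x y * (g y ^ p * (w y ^ p)⁻¹)) :=
              lintegral_lintegral_swap
                (((hw.comp measurable_fst).pow_const _).mul
                  (hk.mul (((hg.comp measurable_snd).pow_const _).mul
                    (((hw.comp measurable_snd).pow_const _).inv)))).aemeasurable
          _ = ∫⁻ y, (g y ^ p * (w y ^ p)⁻¹) * ∫⁻ x, k x y * w x ^ p := by
              refine lintegral_congr fun y => ?_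
              rw [← lintegral_const_mul _ (f := fun x => k x y * w x ^ p) (hk.of_uncurry_right.mul (hw.pow_const _))]
              refine lintegral_congr fun x => ?_
              ring
          _ ≤ ∫⁻ y, (g y ^ p * (w y ^ p)⁻¹) * (B * w y ^ p) :=
              lintegral_mono fun y => mul_le_mul_right (hB y) _
          _ = ∫⁻ y, B * g y ^ p := by
              refine lintegral_congr fun y => ?_
              calc (g y ^ p * (w y ^ p)⁻¹) * (B * w y ^ p)
                  = B * g y ^ p * ((w y ^ p)⁻¹ * w y ^ p) := by ring
                _ = B * g y ^ p := by
                    rw [ENNReal.inv_mul_cancel (hwp0 y) (hwpt y), mul_one]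
          _ = B * ∫⁻ y, g y ^ p := lintegral_const_mul _ (hg.pow_const _)
    _ = A ^ (p/q) * B * ∫⁻ y, g y ^ p := by ring

lemma ofReal_bound_le_kbound (ε : ℝ) {C₀ : ℝ} (hC₀ : 0 ≤ C₀) (x y : E2) :
    ENNReal.ofReal (C₀ / (Real.sqrt (1 + ‖x‖ ^ 2) ^ (1 - ε) *
        Real.sqrt (1 + (‖x‖ - ‖y‖) ^ 2) * Real.sqrt (1 + (‖x‖ + ‖y‖) ^ 2))) ≤
      kbound ε C₀ x y := by
  have hA : 0 < Real.sqrt (1 + ‖x‖ ^ 2) ^ (1 - ε) :=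
    Real.rpow_pos_of_pos (sqrt_one_add_sq_pos _) _
  have hB : 0 < Real.sqrt (1 + (‖x‖ - ‖y‖) ^ 2) := sqrt_one_add_sq_pos _
  have hC : 0 < Real.sqrt (1 + (‖x‖ + ‖y‖) ^ 2) := sqrt_one_add_sq_pos _
  rw [ENNReal.ofReal_div_of_pos (by positivity), div_eq_mul_inv,
    ENNReal.ofReal_mul (by positivity), ENNReal.ofReal_mul (by positivity)]
  rw [ENNReal.mul_inv (Or.inr ENNReal.ofReal_ne_top)
      (Or.inr (ENNReal.ofReal_pos.2 hC).ne'),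
    ENNReal.mul_inv (Or.inr ENNReal.ofReal_ne_top)
      (Or.inr (ENNReal.ofReal_pos.2 hB).ne')]
  have e1 : ENNReal.ofReal (Real.sqrt (1 + ‖x‖ ^ 2) ^ (1 - ε)) = JB ‖x‖ ^ (1 - ε) := by
    rw [JB, ENNReal.ofReal_rpow_of_pos (sqrt_one_add_sq_pos _)]
  have e2 : (JB ‖x‖ ^ (1 - ε))⁻¹ = JB ‖x‖ ^ (-(1 - ε)) := by
    rw [ENNReal.rpow_neg]
  rw [e1, e2]
  rw [kbound]
  refine le_of_eq ?_
  have : ENNReal.ofReal (Real.sqrt (1 + (‖x‖ - ‖y‖) ^ 2)) = JB (‖x‖ - ‖y‖) := rfl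
  rw [this]
  have : ENNReal.ofReal (Real.sqrt (1 + (‖x‖ + ‖y‖) ^ 2)) = JB (‖x‖ + ‖y‖) := rfl
  rw [this]
  ring

lemma assemble {ε C₀ : ℝ} {K : E2 → E2 → ℂ} (hKm : Measurable (Function.uncurry K))
    (hKk : ∀ x y : E2, (‖K x y‖₊ : ℝ≥0∞) ≤ kbound ε C₀ x y)
    {p : ℝ} (hp : 1 ≤ p) {CC : ℝ≥0∞} (hCC : CC ≠ ⊤)
    (hmain : ∀ g : E2 → ℝ≥0∞, Measurable g →
      ∫⁻ x, (∫⁻ y, kbound ε C₀ x y * g y) ^ p ≤ CC * ∫⁻ y, g y ^ p) :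
    ∃ C : ℝ, 0 < C ∧
      ∀ u : E2 → ℂ, MemLp u (ENNReal.ofReal p) volume →
        (∀ᵐ x : E2, Integrable (fun y => K x y * u y)) ∧
        eLpNorm (fun x => ∫ y, K x y * u y) (ENNReal.ofReal p) volume ≤
          ENNReal.ofReal C * eLpNorm u (ENNReal.ofReal p) volume := by
  have hp0 : 0 < p := by linarith
  have hpE0 : (ENNReal.ofReal p) ≠ 0 := (ENNReal.ofReal_pos.2 hp0).ne'
  have hpEt : (ENNReal.ofReal p) ≠ ⊤ := ENNReal.ofReal_ne_top
  have hpEtoReal : (ENNReal.ofReal p).toReal = p := ENNReal.toReal_ofReal hp0.le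
  refine ⟨CC.toReal ^ (1/p) + 1, by positivity, fun u hu => ?_⟩
  have hCCle : CC ^ (1/p) ≤ ENNReal.ofReal (CC.toReal ^ (1/p) + 1) := by
    have h1 : CC ^ (1/p) ≠ ⊤ := ENNReal.rpow_ne_top_of_nonneg (by positivity) hCC
    rw [← ENNReal.ofReal_toReal h1]
    refine ENNReal.ofReal_le_ofReal ?_
    rw [← ENNReal.toReal_rpow]
    linarith
  obtain ⟨g, hgm, hgae⟩ : ∃ g : E2 → ℝ≥0∞, Measurable g ∧
      (fun y => (‖u y‖₊ : ℝ≥0∞)) =ᵐ[volume] g := by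
    have ham : AEMeasurable (fun y => (‖u y‖₊ : ℝ≥0∞)) volume := hu.aestronglyMeasurable.enorm
    exact ⟨ham.mk _, ham.measurable_mk, ham.ae_eq_mk⟩
  set T : E2 → ℝ≥0∞ := fun x => ∫⁻ y, kbound ε C₀ x y * g y with hT
  have hmeas2 : Measurable (Function.uncurry fun x y : E2 => kbound ε C₀ x y * g y) :=
    (measurable_kbound ε C₀).mul (hgm.comp measurable_snd)
  have hTmeas : Measurable T := hmeas2.lintegral_prod_right
  have hgu : ∫⁻ y, g y ^ p = ∫⁻ y, (‖u y‖₊ : ℝ≥0∞) ^ p :=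
    lintegral_congr_ae ((hgae.fun_comp (· ^ p)).symm)
  have heLp : eLpNorm u (ENNReal.ofReal p) volume =
      (∫⁻ y, (‖u y‖₊ : ℝ≥0∞) ^ p) ^ (1/p) := by
    rw [eLpNorm_eq_lintegral_rpow_enorm_toReal hpE0 hpEt, hpEtoReal]
    rfl
  have hup : ∫⁻ y, (‖u y‖₊ : ℝ≥0∞) ^ p = (eLpNorm u (ENNReal.ofReal p) volume) ^ p := by
    rw [heLp, ← ENNReal.rpow_mul, one_div, inv_mul_cancel₀ hp0.ne', ENNReal.rpow_one]
  have hgp_fin : ∫⁻ y, g y ^ p ≠ ⊤ := by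
    rw [hgu, hup]
    exact ENNReal.rpow_ne_top_of_nonneg hp0.le hu.2.ne
  have hTbound := hmain g hgm
  have hTp_fin : ∫⁻ x, T x ^ p ≠ ⊤ :=
    ne_top_of_le_ne_top (ENNReal.mul_ne_top hCC hgp_fin) hTbound
  have hT_ae : ∀ᵐ x : E2, T x < ⊤ := by
    filter_upwards [ae_lt_top (hTmeas.pow_const p) hTp_fin] with x hx
    by_contra h
    rw [not_lt, top_le_iff] at h
    rw [h, ENNReal.top_rpow_of_pos hp0] at hx
    exact (lt_irrefl _ hx).elim
  have hptw : ∀ x : E2, ∫⁻ y, (‖K x y * u y‖₊ : ℝ≥0∞) ≤ T x := by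
    intro x
    calc ∫⁻ y, (‖K x y * u y‖₊ : ℝ≥0∞)
        = ∫⁻ y, (‖K x y‖₊ : ℝ≥0∞) * (‖u y‖₊ : ℝ≥0∞) := by
          refine lintegral_congr fun y => ?_
          rw [nnnorm_mul, ENNReal.coe_mul]
      _ = ∫⁻ y, (‖K x y‖₊ : ℝ≥0∞) * g y := by
          refine lintegral_congr_ae (hgae.mono fun y hy => ?_)
          dsimp only at hy ⊢
          rw [hy]
      _ ≤ T x := lintegral_mono fun y => mul_le_mul_left (hKk x y) _
  constructor
  · filter_upwards [hT_ae] with x hx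
    refine ⟨(hKm.of_uncurry_left.aestronglyMeasurable).mul hu.aestronglyMeasurable, ?_⟩
    exact lt_of_le_of_lt (hptw x) hx
  · calc eLpNorm (fun x => ∫ y, K x y * u y) (ENNReal.ofReal p) volume
        = (∫⁻ x, (‖∫ y, K x y * u y‖₊ : ℝ≥0∞) ^ p) ^ (1/p) := by
          rw [eLpNorm_eq_lintegral_rpow_enorm_toReal hpE0 hpEt, hpEtoReal]
          rfl
      _ ≤ (∫⁻ x, T x ^ p) ^ (1/p) := by
          refine ENNReal.rpow_le_rpow (lintegral_mono fun x => ?_) (by positivity)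
          exact ENNReal.rpow_le_rpow
            (le_trans (enorm_integral_le_lintegral_enorm _) (hptw x)) hp0.le
      _ ≤ (CC * ∫⁻ y, g y ^ p) ^ (1/p) := ENNReal.rpow_le_rpow hTbound (by positivity)
      _ = CC ^ (1/p) * (∫⁻ y, g y ^ p) ^ (1/p) :=
          ENNReal.mul_rpow_of_nonneg _ _ (by positivity)
      _ = CC ^ (1/p) * eLpNorm u (ENNReal.ofReal p) volume := by
          rw [hgu, ← heLp]
      _ ≤ ENNReal.ofReal (CC.toReal ^ (1/p) + 1) * eLpNorm u (ENNReal.ofReal p) volume :=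
          mul_le_mul_left hCCle _

/-- An integral operator on `ℝ²` whose kernel satisfies the pointwise bound
`|K(x,y)| ≤ C₀ / (⟨x⟩^{1-ε} ⟨|x|-|y|⟩ ⟨|x|+|y|⟩)` is bounded on `L^p(ℝ²)` for every
`1 ≤ p < ∞`. -/
theorem stmt_1
    (ε : ℝ) (hε : 0 < ε) (hε1 : ε < 1)
    (K : EuclideanSpace ℝ (Fin 2) → EuclideanSpace ℝ (Fin 2) → ℂ)
    (hKm : Measurable (Function.uncurry K))
    (C₀ : ℝ) (hC₀ : 0 < C₀)
    (hK : ∀ x y : EuclideanSpace ℝ (Fin 2),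
      ‖K x y‖ ≤ C₀ / (Real.sqrt (1 + ‖x‖ ^ 2) ^ (1 - ε) *
        Real.sqrt (1 + (‖x‖ - ‖y‖) ^ 2) * Real.sqrt (1 + (‖x‖ + ‖y‖) ^ 2)))
    (p : ℝ) (hp : 1 ≤ p) :
    ∃ C : ℝ, 0 < C ∧
      ∀ u : EuclideanSpace ℝ (Fin 2) → ℂ,
        MemLp u (ENNReal.ofReal p) volume →
        (∀ᵐ x : EuclideanSpace ℝ (Fin 2), Integrable (fun y => K x y * u y)) ∧
        eLpNorm (fun x => ∫ y, K x y * u y) (ENNReal.ofReal p) volume ≤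
          ENNReal.ofReal C * eLpNorm u (ENNReal.ofReal p) volume := by
  have hKk : ∀ x y : E2, (‖K x y‖₊ : ℝ≥0∞) ≤ kbound ε C₀ x y := by
    intro x y
    rw [show (‖K x y‖₊ : ℝ≥0∞) = ENNReal.ofReal ‖K x y‖ from (ofReal_norm (K x y)).symm]
    exact le_trans (ENNReal.ofReal_le_ofReal (hK x y))
      (ofReal_bound_le_kbound ε hC₀.le x y)
  rcases eq_or_lt_of_le hp with hp1 | hp1
  · -- p = 1
    obtain ⟨B, hBt, hB⟩ := condB hε hε1 C₀ (s₂ := 0) le_rfl hε (by linarith)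
    have hB' : ∀ y : E2, ∫⁻ x, kbound ε C₀ x y ≤ B := by
      intro y
      have := hB y
      simpa [neg_zero, ENNReal.rpow_zero, mul_one] using this
    refine assemble hKm hKk hp hBt ?_
    intro g hgm
    have hkgm : Measurable (Function.uncurry fun x y : E2 => kbound ε C₀ x y * g y) :=
      (measurable_kbound ε C₀).mul (hgm.comp measurable_snd)
    rw [← hp1]
    simp_rw [ENNReal.rpow_one]
    calc ∫⁻ x, ∫⁻ y, kbound ε C₀ x y * g y
        = ∫⁻ y, ∫⁻ x, kbound ε C₀ x y * g y := lintegral_lintegral_swap hkgm.aemeasurable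
      _ = ∫⁻ y, g y * ∫⁻ x, kbound ε C₀ x y := by
          refine lintegral_congr fun y => ?_
          rw [← lintegral_const_mul _ ((measurable_kbound ε C₀).of_uncurry_right)]
          exact lintegral_congr fun x => mul_comm _ _
      _ ≤ ∫⁻ y, g y * B := lintegral_mono fun y => mul_le_mul_right (hB' y) _
      _ = B * ∫⁻ y, g y := by
          simp_rw [mul_comm _ B]
          exact lintegral_const_mul _ hgm
  · -- 1 < p
    have hpq : p.HolderConjugate (Real.conjExponent p) :=
      Real.HolderConjugate.conjExponent hp1
    set q : ℝ := Real.conjExponent p with hq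
    have hp0 : 0 < p := hpq.pos
    have hq0 : 0 < q := hpq.symm.pos
    set m : ℝ := min ε (1 - ε) with hm
    have hm0 : 0 < m := lt_min hε (by linarith)
    have hmε : m ≤ ε := min_le_left _ _
    have hm1 : m ≤ 1 - ε := min_le_right _ _
    set a : ℝ := m / (4 * (p + q)) with ha
    have ha0 : 0 < a := by positivity
    set s₁ : ℝ := a * q with hs₁
    set s₂ : ℝ := a * p with hs₂
    have hs₁m : s₁ ≤ m / 4 := by
      rw [hs₁, ha, div_mul_eq_mul_div, div_le_div_iff₀ (by positivity) (by norm_num)]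
      nlinarith
    have hs₂m : s₂ ≤ m / 4 := by
      rw [hs₂, ha, div_mul_eq_mul_div, div_le_div_iff₀ (by positivity) (by norm_num)]
      nlinarith
    obtain ⟨A, hAt, hA⟩ := condA hε hε1 C₀ (s₁ := s₁) (by positivity)
      (by linarith) (by linarith)
    obtain ⟨B, hBt, hB⟩ := condB hε hε1 C₀ (s₂ := s₂) (by positivity)
      (by linarith) (by linarith)
    set w : E2 → ℝ≥0∞ := fun x => JB ‖x‖ ^ (-a) with hw
    have hwm : Measurable w := (measurable_JB.comp measurable_norm).pow_const _
    have hw0 : ∀ x, w x ≠ 0 := fun x => by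
      simp [hw, ENNReal.rpow_eq_zero_iff, JB_ne_zero, JB_ne_top]
    have hwt : ∀ x, w x ≠ ⊤ := fun x => by
      simp [hw, ENNReal.rpow_eq_top_iff, JB_ne_zero, JB_ne_top]
    have hwq : ∀ z : E2, w z ^ q = JB ‖z‖ ^ (-s₁) := fun z => by
      rw [hw, ← ENNReal.rpow_mul]
      congr 1
      rw [hs₁]; ring
    have hwp : ∀ z : E2, w z ^ p = JB ‖z‖ ^ (-s₂) := fun z => by
      rw [hw, ← ENNReal.rpow_mul]
      congr 1
      rw [hs₂]; ring
    have hA' : ∀ x : E2, ∫⁻ y, kbound ε C₀ x y * w y ^ q ≤ A * w x ^ q := by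
      intro x
      simp_rw [hwq]
      exact hA x
    have hB' : ∀ y : E2, ∫⁻ x, kbound ε C₀ x y * w x ^ p ≤ B * w y ^ p := by
      intro y
      simp_rw [hwp]
      exact hB y
    have hCCt : A ^ (p/q) * B ≠ ⊤ :=
      ENNReal.mul_ne_top (ENNReal.rpow_ne_top_of_nonneg (by positivity) hAt) hBt
    exact assemble hKm hKk hp hCCt fun g hgm =>
      schur hpq (measurable_kbound ε C₀) hwm hw0 hwt hA' hB' hgm

end
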